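/- Let ν be a σ-finite measure on a measurable space Y, let k(θ,·) and k(θ',·) be positive probability densities w.r.t. ν, let p be a nonnegative measurable function with 0 < ∫ p dν < ∞, and define Ψ_α(q) = ∫ f_α(q(y)/p(y)) p(y) ν(dy) where f_α(u) = (u^α - 1)/(α(α-1)) for α ∈ (0,1). If Ψ_α(k(θ',·)) < ∞ then Ψ_α(k(θ,·)) ≤ ∫ (k(θ',y)^α p(y)^{1-α})/(α-1) · log(k(θ,y)/k(θ',y)) ν(dy) + Ψ_α(k(θ',·)). -/

import Mathlib

open MeasureTheory

theorem stmt_1 {Y : Type*} [MeasurableSpace Y] (ν : Measure Y) [SigmaFinite ν]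
    (α : ℝ) (hα0 : 0 < α) (hα1 : α < 1)
    (q q' p : Y → ℝ)
    (hq : ∀ y, 0 < q y) (hq' : ∀ y, 0 < q' y)
    (hqd : ∫ y, q y ∂ν = 1) (hq'd : ∫ y, q' y ∂ν = 1)
    (hp : ∀ y, 0 ≤ p y) (hpInt : Integrable p ν)
    (hppos : 0 < ∫ y, p y ∂ν)
    (hΨ' : Integrable (fun y => ((q' y / p y) ^ α - 1) / (α * (α - 1)) * p y) ν)
    (hΨ : Integrable (fun y => ((q y / p y) ^ α - 1) / (α * (α - 1)) * p y) ν)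
    (hlog : Integrable
      (fun y => (q' y) ^ α * (p y) ^ (1 - α) / (α - 1) * Real.log (q y / q' y)) ν) :
    ∫ y, ((q y / p y) ^ α - 1) / (α * (α - 1)) * p y ∂ν ≤
      (∫ y, (q' y) ^ α * (p y) ^ (1 - α) / (α - 1) * Real.log (q y / q' y) ∂ν) +
        ∫ y, ((q' y / p y) ^ α - 1) / (α * (α - 1)) * p y ∂ν := by
  have key : ∀ y, ((q y / p y) ^ α - 1) / (α * (α - 1)) * p y ≤
      (q' y) ^ α * (p y) ^ (1 - α) / (α - 1) * Real.log (q y / q' y) +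
      ((q' y / p y) ^ α - 1) / (α * (α - 1)) * p y := by
    intro y
    rcases eq_or_lt_of_le (hp y) with h0 | hpy
    · rw [← h0]
      simp [Real.zero_rpow (by linarith : (1:ℝ) - α ≠ 0)]
    · set a := q y with ha
      set b := q' y with hb
      set c := p y with hc
      have haP : 0 < a := hq y
      have hbP : 0 < b := hq' y
      have hX : 0 < a ^ α := Real.rpow_pos_of_pos haP α
      have hYp : 0 < b ^ α := Real.rpow_pos_of_pos hbP α
      have hP : 0 < c ^ α := Real.rpow_pos_of_pos hpy α
      set L := Real.log (a / b) with hL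
      -- key pointwise convexity inequality
      have hkey : b ^ α * (1 + α * L) ≤ a ^ α := by
        have hs : 0 < (a / b) ^ α := Real.rpow_pos_of_pos (div_pos haP hbP) α
        have h1 : Real.log ((a / b) ^ α) ≤ (a / b) ^ α - 1 :=
          Real.log_le_sub_one_of_pos hs
        rw [Real.log_rpow (div_pos haP hbP)] at h1
        have h2 : (a / b) ^ α = a ^ α / b ^ α :=
          Real.div_rpow haP.le hbP.le α
        rw [h2] at h1
        -- α * L ≤ a^α / b^α - 1
        have := mul_le_mul_of_nonneg_left h1 hYp.le
        calc b ^ α * (1 + α * L) = b ^ α * (α * L) + b ^ α := by ring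
          _ ≤ b ^ α * (a ^ α / b ^ α - 1) + b ^ α := by linarith
          _ = a ^ α := by field_simp; ring
      have hdiv : ∀ x : ℝ, 0 ≤ x → (x / c) ^ α = x ^ α / c ^ α := fun x hx =>
        Real.div_rpow hx hpy.le α
      have hc1 : c ^ (1 - α) = c / c ^ α := by
        rw [Real.rpow_sub hpy, Real.rpow_one]
      rw [hdiv a haP.le, hdiv b hbP.le, hc1, ← sub_nonneg]
      have heq : b ^ α * (c / c ^ α) / (α - 1) * L +
          (b ^ α / c ^ α - 1) / (α * (α - 1)) * c -
          (a ^ α / c ^ α - 1) / (α * (α - 1)) * c =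
          c / (c ^ α * (α * (1 - α))) * (a ^ α - b ^ α * (1 + α * L)) := by
        have hα : α ≠ 0 := hα0.ne'
        have hα1' : α - 1 ≠ 0 := by linarith
        have h1α : (1:ℝ) - α ≠ 0 := by linarith
        have hcα : c ^ α ≠ 0 := hP.ne'
        field_simp
        ring
      rw [heq]
      apply mul_nonneg
      · exact div_nonneg hpy.le
          (mul_pos hP (mul_pos hα0 (by linarith))).le
      · linarith
  calc ∫ y, ((q y / p y) ^ α - 1) / (α * (α - 1)) * p y ∂ν
      ≤ ∫ y, ((q' y) ^ α * (p y) ^ (1 - α) / (α - 1) * Real.log (q y / q' y) +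
          ((q' y / p y) ^ α - 1) / (α * (α - 1)) * p y) ∂ν :=
        integral_mono hΨ (hlog.add hΨ') key
    _ = _ := integral_add hlog hΨ'
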